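/- arXiv:1912.01780 — 5 statements merged into one kernel-verified Lean document; each statement's English description precedes it below -/
import Mathlib

section
/- For all integers n ≥ 1 and k ≥ 1, the independence number of the Hamming graph H(n,k) equals k^(n-1). -/
open SimpleGraph Finset

/-- The Hamming graph `H(n,k)` on vertex set `(ZMod k)^n`:
two vertices are adjacent iff they differ in exactly one coordinate. -/
def hammingGraph (n k : ℕ) : SimpleGraph (Fin n → ZMod k) where
  Adj v w := hammingDist v w = 1
  symm := ⟨fun v w h => by simpa only [hammingDist_comm] using h⟩
  loopless := ⟨fun v h => by simp only [hammingDist_self] at h; exact absurd h (by omega)⟩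

/-- The independence number of the Hamming graph `H(n,k)` is `k^(n-1)`. -/
theorem hamming_indepNum (n k : ℕ) (hn : 1 ≤ n) (hk : 1 ≤ k) :
    IsGreatest {m : ℕ | ∃ s : Finset (Fin n → ZMod k),
      (∀ v ∈ s, ∀ w ∈ s, ¬ (hammingGraph n k).Adj v w) ∧ s.card = m}
      (k ^ (n - 1)) := by
  haveI : NeZero k := ⟨by omega⟩
  obtain ⟨m, rfl⟩ : ∃ m, n = m + 1 := ⟨n - 1, by omega⟩
  simp only [Nat.add_sub_cancel]
  constructor
  · -- membership: the sum-zero set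
    refine ⟨univ.filter (fun v => ∑ i, v i = 0), ?_, ?_⟩
    · intro v hv w hw hadj
      simp only [mem_filter, mem_univ, true_and] at hv hw
      have hadj' : hammingDist v w = 1 := hadj
      rw [hammingDist, card_eq_one] at hadj'
      obtain ⟨j, hj⟩ := hadj'
      have hvw : v j ≠ w j := by
        have : j ∈ ({i | v i ≠ w i} : Finset (Fin (m+1))) := by
          rw [hj]; exact mem_singleton_self j
        simpa using this
      have hsum : ∑ i, (v i - w i) = v j - w j := by
        refine Finset.sum_eq_single j ?_ ?_
        · intro i _ hij
          have : i ∉ ({i | v i ≠ w i} : Finset (Fin (m+1))) := by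
            rw [hj]; simpa using hij
          simp only [Finset.mem_filter, mem_univ, true_and, not_not] at this
          rw [this, sub_self]
        · intro h; exact absurd (mem_univ j) h
      rw [Finset.sum_sub_distrib, hv, hw, sub_self] at hsum
      exact hvw (by linear_combination -hsum)
    · have hc : (univ.filter (fun v : Fin (m+1) → ZMod k => ∑ i, v i = 0)).card
          = (univ : Finset (Fin m → ZMod k)).card := by
        refine Finset.card_bij' (fun v _ => Fin.init v)
          (fun (f : Fin m → ZMod k) _ => Fin.snoc f (-∑ j, f j)) ?_ ?_ ?_ ?_
        · intro v hv; exact mem_univ _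
        · intro f _
          simp only [mem_filter, mem_univ, true_and]
          rw [Fin.sum_univ_castSucc]
          simp
        · intro v hv
          simp only [mem_filter, mem_univ, true_and] at hv
          rw [Fin.sum_univ_castSucc] at hv
          have hl : -∑ j, Fin.init v j = v (Fin.last m) := by
            simp only [Fin.init]
            linear_combination -hv
          show Fin.snoc (Fin.init v) (-∑ j, Fin.init v j) = v
          rw [hl, Fin.snoc_init_self]
        · intro f _
          exact Fin.init_snoc _ _
      rw [hc]
      simp [ZMod.card]
  · -- upper bound
    rintro x ⟨s, hind, rfl⟩
    have h1 : ∀ v ∈ s, Fin.init v ∈ (univ : Finset (Fin m → ZMod k)) :=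
      fun v _ => mem_univ _
    have h2 : Set.InjOn (fun v : Fin (m+1) → ZMod k => Fin.init v) s := by
      intro v hv w hw hvw
      by_contra hne
      apply hind v hv w hw
      show hammingDist v w = 1
      rw [hammingDist, card_eq_one]
      refine ⟨Fin.last m, ?_⟩
      ext i
      simp only [Finset.mem_filter, mem_univ, true_and, mem_singleton]
      constructor
      · intro hi
        by_contra hil
        obtain ⟨j, rfl⟩ := Fin.exists_castSucc_eq.mpr hil
        exact hi (congrFun (show Fin.init v = Fin.init w from hvw) j)
      · rintro rfl
        intro heq
        apply hne
        have hvw' : Fin.init v = Fin.init w := hvw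
        rw [← Fin.snoc_init_self v, ← Fin.snoc_init_self w, hvw', heq]
    calc s.card ≤ (univ : Finset (Fin m → ZMod k)).card :=
          Finset.card_le_card_of_injOn (fun v => Fin.init v) h1 h2
      _ = k ^ m := by simp [ZMod.card]
end

section
/- Fix a partition [n] = F_1 ∪ ... ∪ F_q, X = {v : ∃ j, F_j ⊆ v⁻¹(0)}, Y = complement of X. Then every vertex v_2 ∈ Y has at most q neighbors in X in the Hamming graph H(n,k). -/
open SimpleGraph Finset

/-- Every vertex of `Y` has at most `q` neighbors in `X`. -/
theorem Y_vertex_degree_in_X (n k q : ℕ) (F : Fin q → Finset (Fin n))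
    (hne : ∀ j, (F j).Nonempty)
    (hdisj : ∀ j₁ j₂, j₁ ≠ j₂ → Disjoint (F j₁) (F j₂))
    (hcover : ∀ ℓ : Fin n, ∃ j, ℓ ∈ F j)
    (v₂ : Fin n → ZMod k) (hv₂ : ¬ ∃ j, ∀ ℓ ∈ F j, v₂ ℓ = 0) :
    {w : Fin n → ZMod k |
      (hammingGraph n k).Adj v₂ w ∧ ∃ j, ∀ ℓ ∈ F j, w ℓ = 0}.ncard ≤ q := by
  classical
  set S : Set (Fin n → ZMod k) :=
    {w : Fin n → ZMod k |
      (hammingGraph n k).Adj v₂ w ∧ ∃ j, ∀ ℓ ∈ F j, w ℓ = 0} with hS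
  -- unique differing coordinate
  have hdiff : ∀ w ∈ S, ∃ ℓ₀, v₂ ℓ₀ ≠ w ℓ₀ ∧ ∀ ℓ, ℓ ≠ ℓ₀ → v₂ ℓ = w ℓ := by
    intro w hw
    have hd : hammingDist v₂ w = 1 := hw.1
    rw [hammingDist, Finset.card_eq_one] at hd
    obtain ⟨ℓ₀, hℓ₀⟩ := hd
    refine ⟨ℓ₀, ?_, ?_⟩
    · have : ℓ₀ ∈ Finset.filter (fun i => v₂ i ≠ w i) Finset.univ := by
        rw [hℓ₀]; exact Finset.mem_singleton_self _
      simpa using this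
    · intro ℓ hℓ
      by_contra h
      have : ℓ ∈ Finset.filter (fun i => v₂ i ≠ w i) Finset.univ := by
        simpa using h
      rw [hℓ₀, Finset.mem_singleton] at this
      exact hℓ this
  rcases Nat.eq_zero_or_pos q with hq | hq
  · subst hq
    have : S = ∅ := by
      ext w
      simp only [hS, Set.mem_setOf_eq, Set.mem_empty_iff_false, iff_false]
      rintro ⟨-, j, -⟩
      exact j.elim0
    simp [this]
  · have : Nonempty (Fin q) := ⟨⟨0, hq⟩⟩
    -- map each w to a witness j
    set f : (Fin n → ZMod k) → Fin q := fun w =>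
      if h : ∃ j, ∀ ℓ ∈ F j, w ℓ = 0 then h.choose else Classical.arbitrary _
      with hf
    have hfj : ∀ w ∈ S, ∀ ℓ ∈ F (f w), w ℓ = 0 := by
      intro w hw
      have h : ∃ j, ∀ ℓ ∈ F j, w ℓ = 0 := hw.2
      simp only [hf, dif_pos h]
      exact h.choose_spec
    -- key: the differing coordinate lies in F (f w)
    have hkey : ∀ w ∈ S, ∀ ℓ₀, (v₂ ℓ₀ ≠ w ℓ₀ ∧ ∀ ℓ, ℓ ≠ ℓ₀ → v₂ ℓ = w ℓ) →
        ℓ₀ ∈ F (f w) := by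
      intro w hw ℓ₀ ⟨h1, h2⟩
      by_contra hmem
      apply hv₂
      refine ⟨f w, fun ℓ hℓ => ?_⟩
      have : ℓ ≠ ℓ₀ := fun h => hmem (h ▸ hℓ)
      rw [h2 ℓ this]
      exact hfj w hw ℓ hℓ
    have hinj : Set.InjOn f S := by
      intro w hw w' hw' hff
      obtain ⟨ℓ₀, h1, h2⟩ := hdiff w hw
      obtain ⟨ℓ₀', h1', h2'⟩ := hdiff w' hw'
      have hm : ℓ₀ ∈ F (f w) := hkey w hw ℓ₀ ⟨h1, h2⟩
      have hm' : ℓ₀' ∈ F (f w) := hff ▸ hkey w' hw' ℓ₀' ⟨h1', h2'⟩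
      by_cases he : ℓ₀ = ℓ₀'
      · subst he
        funext ℓ
        by_cases hℓ : ℓ = ℓ₀
        · subst hℓ
          rw [hfj w hw ℓ hm, hfj w' hw' ℓ (hff ▸ hm)]
        · rw [← h2 ℓ hℓ, h2' ℓ hℓ]
      · exfalso
        apply hv₂
        refine ⟨f w, fun ℓ hℓ => ?_⟩
        by_cases hℓ0 : ℓ = ℓ₀
        · subst hℓ0
          rw [h2' ℓ he]
          exact hfj w' hw' ℓ (hff ▸ hℓ)
        · rw [h2 ℓ hℓ0]
          exact hfj w hw ℓ hℓ
    calc S.ncard ≤ (Set.univ : Set (Fin q)).ncard :=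
          Set.ncard_le_ncard_of_injOn f (fun a _ => Set.mem_univ _) hinj
            Set.finite_univ
      _ = q := by simp [Set.ncard_univ]
end

section
/- Fix a partition [n] = F_1 ∪ ... ∪ F_q with |q - √n| < 1 and ||F_j| - √n| < 1 for all j, and i_1, i_2 ∈ ZMod k. The induced subgraph of H(n,k) on X_{i_1} ∪ Y_{i_2} has maximum degree at most ⌈√n⌉. -/
open SimpleGraph Finset

lemma exists_diff_coord {n k : ℕ} {v w : Fin n → ZMod k} (h : hammingDist v w = 1) :
    ∃ ℓ, v ℓ ≠ w ℓ ∧ (∀ i, i ≠ ℓ → w i = v i) ∧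
      ∑ i, w i = ∑ i, v i + (w ℓ - v ℓ) := by
  rw [hammingDist, Finset.card_eq_one] at h
  obtain ⟨ℓ, hℓ⟩ := h
  have hmem : ℓ ∈ Finset.univ.filter fun i => v i ≠ w i := hℓ ▸ Finset.mem_singleton_self ℓ
  have hne := (Finset.mem_filter.mp hmem).2
  have heq : ∀ i, i ≠ ℓ → w i = v i := by
    intro i hi
    by_contra hc
    have hmem' : i ∈ Finset.univ.filter fun i => v i ≠ w i :=
      Finset.mem_filter.mpr ⟨Finset.mem_univ _, fun he => hc he.symm⟩
    rw [hℓ, Finset.mem_singleton] at hmem'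
    exact hi hmem'
  refine ⟨ℓ, hne, heq, ?_⟩
  have hsum : ∑ i, (w i - v i) = w ℓ - v ℓ :=
    Finset.sum_eq_single ℓ (fun b _ hb => by rw [heq b hb, sub_self])
      (fun h => absurd (Finset.mem_univ ℓ) h)
  calc ∑ i, w i = ∑ i, (v i + (w i - v i)) := by simp
    _ = ∑ i, v i + ∑ i, (w i - v i) := Finset.sum_add_distrib
    _ = ∑ i, v i + (w ℓ - v ℓ) := by rw [hsum]

/-- The induced subgraph of `H(n,k)` on `X_{i₁} ∪ Y_{i₂}` has maximum degree
at most `⌈√n⌉`. -/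
theorem induced_maxDegree_le (n k q : ℕ) (F : Fin q → Finset (Fin n))
    (hne : ∀ j, (F j).Nonempty)
    (hdisj : ∀ j₁ j₂, j₁ ≠ j₂ → Disjoint (F j₁) (F j₂))
    (hcover : ∀ ℓ : Fin n, ∃ j, ℓ ∈ F j)
    (hq : |(q : ℝ) - Real.sqrt n| < 1)
    (hF : ∀ j, |((F j).card : ℝ) - Real.sqrt n| < 1)
    (i₁ i₂ : ZMod k) :
    ∀ v ∈ ({v : Fin n → ZMod k | (∃ j, ∀ ℓ ∈ F j, v ℓ = 0) ∧ ∑ ℓ, v ℓ = i₁} ∪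
           {v : Fin n → ZMod k | (∀ j, ¬ ∀ ℓ ∈ F j, v ℓ = 0) ∧ ∑ ℓ, v ℓ = i₂}),
      ({w : Fin n → ZMod k | (hammingGraph n k).Adj v w ∧
        w ∈ ({v : Fin n → ZMod k | (∃ j, ∀ ℓ ∈ F j, v ℓ = 0) ∧ ∑ ℓ, v ℓ = i₁} ∪
             {v : Fin n → ZMod k | (∀ j, ¬ ∀ ℓ ∈ F j, v ℓ = 0) ∧ ∑ ℓ, v ℓ = i₂})}).ncard
        ≤ ⌈Real.sqrt n⌉₊ := by
  have hcard : ∀ c : ℕ, |(c : ℝ) - Real.sqrt n| < 1 → c ≤ ⌈Real.sqrt n⌉₊ := by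
    intro c h
    have h1 : (c : ℝ) < Real.sqrt n + 1 := by have := abs_lt.mp h; linarith [this.2]
    have h2 : Real.sqrt n ≤ (⌈Real.sqrt n⌉₊ : ℝ) := Nat.le_ceil _
    have h3 : (c : ℝ) < (⌈Real.sqrt n⌉₊ : ℝ) + 1 := by linarith
    exact Nat.lt_succ_iff.mp (by exact_mod_cast h3)
  intro v hv
  rcases hv with hX | hY
  · -- v ∈ X
    obtain ⟨⟨j₀, hj₀⟩, hsv⟩ := hX
    have hsub : {w : Fin n → ZMod k | (hammingGraph n k).Adj v w ∧
        w ∈ ({v : Fin n → ZMod k | (∃ j, ∀ ℓ ∈ F j, v ℓ = 0) ∧ ∑ ℓ, v ℓ = i₁} ∪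
             {v : Fin n → ZMod k | (∀ j, ¬ ∀ ℓ ∈ F j, v ℓ = 0) ∧ ∑ ℓ, v ℓ = i₂})} ⊆
        (fun ℓ => Function.update v ℓ (i₂ - i₁)) '' ↑(F j₀) := by
      rintro w ⟨hadj, hwm⟩
      obtain ⟨ℓ, hnel, heq, hsum⟩ := exists_diff_coord hadj
      have hwY : (∀ j, ¬ ∀ ℓ ∈ F j, w ℓ = 0) ∧ ∑ ℓ, w ℓ = i₂ := by
        rcases hwm with hX' | hY'
        · exfalso
          obtain ⟨_, hs'⟩ := hX'
          rw [hs', hsv] at hsum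
          have hz : w ℓ - v ℓ = 0 := (left_eq_add.mp hsum)
          exact hnel (sub_eq_zero.mp hz).symm
        · exact hY'
      obtain ⟨hfail, hsw⟩ := hwY
      have hfj := hfail j₀
      push_neg at hfj
      obtain ⟨m, hm, hm0⟩ := hfj
      have hmℓ : m = ℓ := by
        by_contra hc
        exact hm0 (by rw [heq m hc, hj₀ m hm])
      subst hmℓ
      have hvℓ : v m = 0 := hj₀ m hm
      have hwℓ : w m = i₂ - i₁ := by
        rw [hsw, hsv, hvℓ] at hsum
        rw [hsum]; ring
      refine ⟨m, hm, ?_⟩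
      show Function.update v m (i₂ - i₁) = w
      funext i
      by_cases hi : i = m
      · subst hi; rw [Function.update_self]; exact hwℓ.symm
      · rw [Function.update_of_ne hi]; exact (heq i hi).symm
    calc ({w : Fin n → ZMod k | (hammingGraph n k).Adj v w ∧
        w ∈ ({v : Fin n → ZMod k | (∃ j, ∀ ℓ ∈ F j, v ℓ = 0) ∧ ∑ ℓ, v ℓ = i₁} ∪
             {v : Fin n → ZMod k | (∀ j, ¬ ∀ ℓ ∈ F j, v ℓ = 0) ∧ ∑ ℓ, v ℓ = i₂})}).ncard
        ≤ ((fun ℓ => Function.update v ℓ (i₂ - i₁)) '' ↑(F j₀)).ncard :=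
          Set.ncard_le_ncard hsub (Set.toFinite _)
      _ ≤ (↑(F j₀) : Set (Fin n)).ncard := Set.ncard_image_le (Set.toFinite _)
      _ = (F j₀).card := Set.ncard_coe_finset _
      _ ≤ ⌈Real.sqrt n⌉₊ := hcard _ (hF j₀)
  · -- v ∈ Y
    obtain ⟨hfv, hsv⟩ := hY
    set S := {w : Fin n → ZMod k | (hammingGraph n k).Adj v w ∧
        w ∈ ({v : Fin n → ZMod k | (∃ j, ∀ ℓ ∈ F j, v ℓ = 0) ∧ ∑ ℓ, v ℓ = i₁} ∪
             {v : Fin n → ZMod k | (∀ j, ¬ ∀ ℓ ∈ F j, v ℓ = 0) ∧ ∑ ℓ, v ℓ = i₂})} with hS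
    set f : (Fin n → ZMod k) → ℕ :=
      fun w => if h : ∃ j, ∀ ℓ ∈ F j, w ℓ = 0 then (h.choose : Fin q).val else 0 with hfdef
    have key : ∀ w ∈ S, ∃ h : (∃ j, ∀ ℓ ∈ F j, w ℓ = 0), ∃ ℓ ∈ F h.choose,
        v ℓ ≠ 0 ∧ (∀ m ∈ F h.choose, m ≠ ℓ → v m = 0) ∧ w = Function.update v ℓ 0 := by
      rintro w ⟨hadj, hwm⟩
      obtain ⟨ℓ, hnel, heq, hsum⟩ := exists_diff_coord hadj
      have hwX : (∃ j, ∀ ℓ ∈ F j, w ℓ = 0) ∧ ∑ ℓ, w ℓ = i₁ := by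
        rcases hwm with hX' | hY'
        · exact hX'
        · exfalso
          obtain ⟨_, hs'⟩ := hY'
          rw [hs', hsv] at hsum
          have hz : w ℓ - v ℓ = 0 := (left_eq_add.mp hsum)
          exact hnel (sub_eq_zero.mp hz).symm
      obtain ⟨h, _⟩ := hwX
      have hj' : ∀ ℓ ∈ F h.choose, w ℓ = 0 := h.choose_spec
      have hfj := hfv h.choose
      push_neg at hfj
      obtain ⟨m, hm, hm0⟩ := hfj
      have hmℓ : m = ℓ := by
        by_contra hc
        exact hm0 (by rw [← heq m hc, hj' m hm])
      subst hmℓ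
      have hwm0 : w m = 0 := hj' m hm
      refine ⟨h, m, hm, hm0, ?_, ?_⟩
      · intro m' hm' hm'ne
        rw [← heq m' hm'ne]
        exact hj' m' hm'
      · funext i
        by_cases hi : i = m
        · subst hi; rw [Function.update_self]; exact hwm0
        · rw [Function.update_of_ne hi]; exact heq i hi
    have hfmem : ∀ w ∈ S, f w ∈ (↑(Finset.range q) : Set ℕ) := by
      intro w hw
      obtain ⟨h, _⟩ := key w hw
      simp only [hfdef, dif_pos h]
      simpa using (h.choose).isLt
    have hinj : Set.InjOn f S := by
      intro w₁ hw₁ w₂ hw₂ hfe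
      obtain ⟨h₁, ℓ₁, hℓ₁, hv₁, hz₁, he₁⟩ := key w₁ hw₁
      obtain ⟨h₂, ℓ₂, hℓ₂, hv₂, hz₂, he₂⟩ := key w₂ hw₂
      rw [hfdef] at hfe
      simp only [dif_pos h₁, dif_pos h₂] at hfe
      have hje : h₁.choose = h₂.choose := Fin.ext hfe
      have hℓe : ℓ₁ = ℓ₂ := by
        by_contra hc
        exact hv₁ (hz₂ ℓ₁ (hje ▸ hℓ₁) hc)
      rw [he₁, he₂, hℓe]
    calc S.ncard ≤ (↑(Finset.range q) : Set ℕ).ncard :=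
          Set.ncard_le_ncard_of_injOn f hfmem hinj (Set.toFinite _)
      _ = q := by rw [Set.ncard_coe_finset, Finset.card_range]
      _ ≤ ⌈Real.sqrt n⌉₊ := hcard q hq
end

section
/- For real numbers 0 < p ≤ q, the inequality (p+q)·log₂(p+q) ≥ p·log₂(p) + q·log₂(q) + 2p holds. -/
lemma log_one_add_ge (x : ℝ) (hx0 : 0 ≤ x) (hx1 : x ≤ 1) :
    x * Real.log 2 ≤ Real.log (1 + x) := by
  have h := strictConcaveOn_log_Ioi.concaveOn.2 (x := (1:ℝ)) (y := (2:ℝ))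
    (by simp : (1:ℝ) ∈ Set.Ioi 0) (by norm_num : (2:ℝ) ∈ Set.Ioi 0)
    (by linarith : 0 ≤ 1 - x) hx0 (by ring)
  simp only [smul_eq_mul, Real.log_one] at h
  have e : (1 - x) * 1 + x * 2 = 1 + x := by ring
  rw [e] at h
  linarith

/-- For `0 < p ≤ q`, `(p+q)·log₂(p+q) ≥ p·log₂ p + q·log₂ q + 2p`. -/
theorem log_ineq (p q : ℝ) (hp : 0 < p) (hpq : p ≤ q) :
    (p + q) * Real.logb 2 (p + q)
      ≥ p * Real.logb 2 p + q * Real.logb 2 q + 2 * p := by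
  have hq : 0 < q := lt_of_lt_of_le hp hpq
  have hs : 0 < p + q := by linarith
  have hlog2 : (0:ℝ) < Real.log 2 := Real.log_pos (by norm_num)
  -- h1 : log(p+q) - log p ≥ log 2
  have h1 : Real.log 2 ≤ Real.log (p + q) - Real.log p := by
    have h2p : Real.log (2 * p) ≤ Real.log (p + q) :=
      Real.log_le_log (by linarith) (by linarith)
    rw [Real.log_mul (by norm_num) hp.ne'] at h2p
    linarith
  -- h2 : log(p+q) - log q ≥ (p/q) * log 2
  have h2 : (p / q) * Real.log 2 ≤ Real.log (p + q) - Real.log q := by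
    have hd0 : 0 ≤ p / q := by positivity
    have hd1 : p / q ≤ 1 := (div_le_one hq).mpr hpq
    have := log_one_add_ge (p / q) hd0 hd1
    have e : q * (1 + p / q) = p + q := by field_simp; ring
    have hlog : Real.log (p + q) = Real.log q + Real.log (1 + p / q) := by
      rw [← e, Real.log_mul hq.ne' (by positivity)]
    linarith
  have key : p * Real.log p + q * Real.log q + 2 * p * Real.log 2
      ≤ (p + q) * Real.log (p + q) := by
    have t1 : p * Real.log 2 ≤ p * (Real.log (p + q) - Real.log p) :=
      mul_le_mul_of_nonneg_left h1 hp.le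
    have t2 : q * ((p / q) * Real.log 2) ≤ q * (Real.log (p + q) - Real.log q) :=
      mul_le_mul_of_nonneg_left h2 hq.le
    have e2 : q * ((p / q) * Real.log 2) = p * Real.log 2 := by field_simp
    rw [e2] at t2
    nlinarith [t1, t2]
  simp only [Real.logb]
  rw [ge_iff_le, ← sub_nonneg]
  have e3 : (p + q) * (Real.log (p + q) / Real.log 2)
      - (p * (Real.log p / Real.log 2) + q * (Real.log q / Real.log 2) + 2 * p)
      = ((p + q) * Real.log (p + q)
        - (p * Real.log p + q * Real.log q + 2 * p * Real.log 2)) / Real.log 2 := by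
    field_simp
  rw [e3]
  exact div_nonneg (by linarith) hlog2.le
end

section
/- Let k ≥ 2 and let S be a (finite, nonempty) subgraph of the Hamming graph H(n,k) with vertex set V(S) and edge set E(S), and let d̄ = 2|E(S)|/|V(S)| be its average degree. Then log₂|V(S)| ≥ d̄/(k-1). Equivalently, |V(S)|·log₂|V(S)| ≥ 2|E(S)|/(k-1). -/
open SimpleGraph Finset

section Aux
open Real Finset

lemma log_chord {t : ℝ} (h0 : 0 ≤ t) (h1 : t ≤ 1) : t * Real.log 2 ≤ Real.log (1 + t) := by
  have := strictConcaveOn_log_Ioi.concaveOn.2 (Set.mem_Ioi.2 one_pos)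
    (Set.mem_Ioi.2 two_pos) (by linarith : (0:ℝ) ≤ 1 - t) h0 (by ring)
  simp only [smul_eq_mul, Real.log_one, mul_zero, zero_add] at this
  calc t * Real.log 2 ≤ Real.log ((1-t)*1 + t*2) := this
  _ = Real.log (1+t) := by rw [show (1-t)*1 + t*2 = 1 + t by ring]

lemma pair_core {a b : ℝ} (ha : 1 ≤ a) (hab : a ≤ b) :
    2 * a ≤ (a+b) * Real.logb 2 (a+b) - a * Real.logb 2 a - b * Real.logb 2 b := by
  have hb : (1:ℝ) ≤ b := le_trans ha hab
  have ha0 : 0 < a := by linarith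
  have hb0 : 0 < b := by linarith
  have hlog2 : 0 < Real.log 2 := Real.log_pos one_lt_two
  have h1 : a ≤ a * Real.logb 2 ((a+b)/a) := by
    have h2ab : (2:ℝ) ≤ (a+b)/a := by rw [le_div_iff₀ ha0]; linarith
    have := Real.logb_le_logb_of_le (one_lt_two) two_pos h2ab
    nlinarith [Real.logb_self_eq_one (b := 2) (by norm_num : (1:ℝ) < 2)]
  have h2 : a ≤ b * Real.logb 2 ((a+b)/b) := by
    have hd : (a+b)/b = 1 + a/b := by field_simp; ring
    have hc := log_chord (t := a/b) (by positivity) ((div_le_one hb0).2 hab)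
    rw [hd, Real.logb, mul_div_assoc', le_div_iff₀ hlog2]
    have hba : b * (a/b) = a := by field_simp
    nlinarith [mul_le_mul_of_nonneg_left hc hb0.le]
  have hdec : (a+b) * Real.logb 2 (a+b) - a * Real.logb 2 a - b * Real.logb 2 b
      = a * Real.logb 2 ((a+b)/a) + b * Real.logb 2 ((a+b)/b) := by
    rw [Real.logb_div (by positivity) ha0.ne', Real.logb_div (by positivity) hb0.ne']
    ring
  rw [hdec]; linarith

/-- pair bound over naturals -/
lemma pair_bound (a b A : ℕ) (hab : a + b ≤ A) :
    2 * (min a b : ℝ) ≤ ((a:ℝ)+b) * Real.logb 2 A - a * Real.logb 2 a - b * Real.logb 2 b := by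
  have step : 2 * (min a b : ℝ) ≤ ((a:ℝ)+b) * Real.logb 2 ((a:ℝ)+b) - a * Real.logb 2 a - b * Real.logb 2 b := by
    rcases Nat.eq_zero_or_pos a with rfl | ha
    · simp
    rcases Nat.eq_zero_or_pos b with rfl | hb
    · simp
    rcases le_total a b with h | h
    · rw [min_eq_left (show (a:ℝ) ≤ b by exact_mod_cast h)]
      exact pair_core (by exact_mod_cast ha) (by exact_mod_cast h)
    · rw [min_eq_right (show (b:ℝ) ≤ a by exact_mod_cast h)]
      have := pair_core (a := b) (b := a) (by exact_mod_cast hb) (by exact_mod_cast h)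
      rw [show (b:ℝ)+a = a+b from add_comm _ _] at this
      linarith [this]
  refine step.trans ?_
  have : ((a:ℝ)+b) * Real.logb 2 ((a:ℝ)+b) ≤ ((a:ℝ)+b) * Real.logb 2 A := by
    rcases Nat.eq_zero_or_pos (a+b) with h | h
    · have : a = 0 ∧ b = 0 := by omega
      simp [this.1, this.2]
    · apply mul_le_mul_of_nonneg_left _ (by positivity)
      apply Real.logb_le_logb_of_le one_lt_two (by exact_mod_cast h)
      exact_mod_cast hab
  linarith


lemma sum_offDiag_eq {α : Type*} [Fintype α] [DecidableEq α] (F : α × α → ℝ) :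
    ∑ q ∈ (univ : Finset α).offDiag, F q = (∑ x, ∑ y, F (x,y)) - ∑ x, F (x,x) := by
  have h1 : (univ : Finset α).offDiag = (univ ×ˢ univ).filter (fun p => ¬ p.1 = p.2) := by
    ext p; simp [Finset.mem_offDiag]
  have h2 : (univ ×ˢ univ : Finset (α × α)).filter (fun p => p.1 = p.2)
      = univ.image (fun c => (c,c)) := by
    ext ⟨x,y⟩
    simp only [mem_filter, mem_product, mem_univ, true_and, mem_image]
    constructor
    · rintro rfl; exact ⟨x, rfl⟩
    · rintro ⟨c, h⟩; cases h; rfl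
  have h3 := Finset.sum_filter_add_sum_filter_not (univ ×ˢ univ) (fun p => p.1 = p.2) F
  rw [h1]
  have h4 : ∑ q ∈ (univ ×ˢ univ : Finset (α × α)).filter (fun p => p.1 = p.2), F q
      = ∑ x, F (x,x) := by
    rw [h2, Finset.sum_image (fun a _ b _ h => by injection h)]
  have h5 : ∑ q ∈ (univ ×ˢ univ : Finset (α × α)), F q = ∑ x, ∑ y, F (x,y) := by
    rw [Finset.sum_product]
  linarith

lemma hamming_snoc {n k : ℕ} (u v : Fin (n+1) → ZMod k) :
    hammingDist u v = hammingDist (u ∘ Fin.castSucc) (v ∘ Fin.castSucc)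
      + (if u (Fin.last n) = v (Fin.last n) then 0 else 1) := by
  simp only [hammingDist, Finset.card_filter]
  rw [Fin.sum_univ_castSucc]
  simp only [Function.comp_apply]
  congr 1
  split_ifs <;> simp_all

lemma eq_of_proj_last {n k : ℕ} {u v : Fin (n+1) → ZMod k}
    (hp : u ∘ Fin.castSucc = v ∘ Fin.castSucc) (hl : u (Fin.last n) = v (Fin.last n)) :
    u = v := by
  funext i
  rcases Fin.lastCases (motive := fun i => u i = v i) hl (fun j => congrFun hp j) i with h
  exact h

theorem keyLemma (k : ℕ) (hk : 2 ≤ k) :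
    ∀ (n : ℕ) (V : Finset (Fin n → ZMod k)),
    ((((V ×ˢ V).filter fun p => hammingDist p.1 p.2 = 1).card : ℕ) : ℝ)
      ≤ ((k:ℝ) - 1) * ((V.card : ℝ) * Real.logb 2 (V.card))
  | 0, V => by
    have hsub : ∀ p ∈ (V ×ˢ V), ¬ (hammingDist p.1 p.2 = 1) := by
      intro p _
      have : p.1 = p.2 := Subsingleton.elim _ _
      simp [this]
    rw [Finset.filter_false_of_mem hsub]
    have hc : V.card ≤ 1 := Finset.card_le_one.2 fun a _ b _ => Subsingleton.elim a b
    interval_cases h : V.card <;> simp <;> positivity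
  | (n+1), V => by
    haveI : NeZero k := ⟨by omega⟩
    set pr : (Fin (n+1) → ZMod k) → (Fin n → ZMod k) := fun v => v ∘ Fin.castSucc with hpr
    set Vc : ZMod k → Finset (Fin (n+1) → ZMod k) :=
      fun c => V.filter (fun v => v (Fin.last n) = c) with hVc
    set W : ZMod k → Finset (Fin n → ZMod k) := fun c => (Vc c).image pr with hW
    set a : ZMod k → ℕ := fun c => (Vc c).card with ha
    -- injectivity on fibers
    have hsnoc : ∀ u v : Fin (n+1) → ZMod k, hammingDist u v
        = hammingDist (pr u) (pr v)
          + (if u (Fin.last n) = v (Fin.last n) then 0 else 1) :=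
      fun u v => hamming_snoc u v
    have hinj : ∀ c : ZMod k, Set.InjOn pr (Vc c) := by
      intro c u hu v hv h
      exact eq_of_proj_last h (by
        rw [Finset.mem_coe, hVc, Finset.mem_filter] at hu hv
        rw [hu.2, hv.2])
    have hWcard : ∀ c, (W c).card = a c := fun c => Finset.card_image_of_injOn (hinj c)
    have hsum_a : ∑ c, a c = V.card :=
      (Finset.card_eq_sum_card_fiberwise (fun v _ => Finset.mem_univ (v (Fin.last n)))).symm
    set P := (V ×ˢ V).filter (fun p => hammingDist p.1 p.2 = 1) with hP
    set Ps := P.filter (fun p => p.1 (Fin.last n) = p.2 (Fin.last n)) with hPs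
    set Pd := P.filter (fun p => ¬ p.1 (Fin.last n) = p.2 (Fin.last n)) with hPd
    have hsplit : Ps.card + Pd.card = P.card :=
      Finset.card_filter_add_card_filter_not _
    -- membership unfolding for P
    have hmemP : ∀ p : (Fin (n+1) → ZMod k) × (Fin (n+1) → ZMod k),
        p ∈ P ↔ p.1 ∈ V ∧ p.2 ∈ V ∧ hammingDist p.1 p.2 = 1 := by
      intro p; rw [hP, Finset.mem_filter, Finset.mem_product]; tauto
    -- same-last-coordinate pairs
    have hPs_bound : (Ps.card : ℝ) ≤ ((k:ℝ)-1) * ∑ c, (a c : ℝ) * Real.logb 2 (a c) := by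
      have hfib : Ps.card = ∑ c, (Ps.filter (fun p => p.1 (Fin.last n) = c)).card :=
        Finset.card_eq_sum_card_fiberwise (fun p _ => Finset.mem_univ _)
      have hstep : ∀ c, ((Ps.filter (fun p => p.1 (Fin.last n) = c)).card : ℝ)
          ≤ ((k:ℝ)-1) * ((a c : ℝ) * Real.logb 2 (a c)) := by
        intro c
        have hcard : (Ps.filter (fun p => p.1 (Fin.last n) = c)).card
            ≤ ((W c ×ˢ W c).filter fun q => hammingDist q.1 q.2 = 1).card := by
          apply Finset.card_le_card_of_injOn (fun p => (pr p.1, pr p.2))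
          · intro p hp
            rw [Finset.mem_coe, Finset.mem_filter, hPs, Finset.mem_filter] at hp
            rw [Finset.mem_coe]
            obtain ⟨⟨hpP, hlast⟩, hc⟩ := hp
            rw [hmemP] at hpP
            obtain ⟨h1, h2, hd⟩ := hpP
            have hd' : hammingDist (pr p.1) (pr p.2) = 1 := by
              have := hsnoc p.1 p.2
              rw [hd, if_pos hlast] at this
              omega
            refine Finset.mem_filter.2 ⟨Finset.mem_product.2 ⟨?_, ?_⟩, hd'⟩
            · exact Finset.mem_image_of_mem pr (Finset.mem_filter.2 ⟨h1, hc⟩)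
            · exact Finset.mem_image_of_mem pr
                (Finset.mem_filter.2 ⟨h2, hlast.symm.trans hc⟩)
          · intro p hp q hq h
            simp only [Finset.coe_filter, Set.mem_setOf_eq] at hp hq
            obtain ⟨hpPs, hpc⟩ := hp
            obtain ⟨hqPs, hqc⟩ := hq
            rw [hPs, Finset.mem_filter] at hpPs hqPs
            have h1 := congrArg Prod.fst h
            have h2 := congrArg Prod.snd h
            have e1 : p.1 = q.1 := eq_of_proj_last h1 (by rw [hpc, hqc])
            have e2 : p.2 = q.2 := eq_of_proj_last h2 (by
              rw [← hpPs.2, ← hqPs.2, hpc, hqc])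
            exact Prod.ext e1 e2
        calc ((Ps.filter (fun p => p.1 (Fin.last n) = c)).card : ℝ)
            ≤ (((W c ×ˢ W c).filter fun q => hammingDist q.1 q.2 = 1).card : ℝ) := by
              exact_mod_cast hcard
          _ ≤ ((k:ℝ)-1) * (((W c).card : ℝ) * Real.logb 2 ((W c).card)) := keyLemma k hk n (W c)
          _ = ((k:ℝ)-1) * ((a c : ℝ) * Real.logb 2 (a c)) := by rw [hWcard]
      calc (Ps.card : ℝ) = ∑ c, ((Ps.filter (fun p => p.1 (Fin.last n) = c)).card : ℝ) := by
            rw [hfib]; push_cast; ring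
        _ ≤ ∑ c, ((k:ℝ)-1) * ((a c : ℝ) * Real.logb 2 (a c)) := Finset.sum_le_sum (fun c _ => hstep c)
        _ = ((k:ℝ)-1) * ∑ c, (a c : ℝ) * Real.logb 2 (a c) := by rw [Finset.mul_sum]
    -- different-last-coordinate pairs
    have hPd_bound : (Pd.card : ℝ) ≤ ∑ q ∈ (univ : Finset (ZMod k)).offDiag,
        (min (a q.1) (a q.2) : ℝ) := by
      have hcard : Pd.card ≤ ((univ : Finset (ZMod k)).offDiag.sigma
          (fun q => W q.1 ∩ W q.2)).card := by
        apply Finset.card_le_card_of_injOn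
          (fun p => ⟨(p.1 (Fin.last n), p.2 (Fin.last n)), pr p.1⟩)
        · intro p hp
          rw [Finset.mem_coe, hPd, Finset.mem_filter] at hp
          rw [Finset.mem_coe]
          obtain ⟨hpP, hne⟩ := hp
          rw [hmemP] at hpP
          obtain ⟨h1, h2, hd⟩ := hpP
          have hproj : pr p.1 = pr p.2 := by
            have := hsnoc p.1 p.2
            rw [hd, if_neg hne] at this
            exact hammingDist_eq_zero.1 (by omega)
          refine Finset.mem_sigma.2 ⟨Finset.mem_offDiag.2 ⟨Finset.mem_univ _, Finset.mem_univ _, hne⟩, ?_⟩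
          refine Finset.mem_inter.2 ⟨Finset.mem_image_of_mem pr (Finset.mem_filter.2 ⟨h1, rfl⟩), ?_⟩
          dsimp only
          rw [hproj]
          exact Finset.mem_image_of_mem pr (Finset.mem_filter.2 ⟨h2, rfl⟩)
        · intro p hp q hq h
          rw [Finset.mem_coe] at hp hq
          have hpp : pr p.1 = pr p.2 := by
            rw [hPd, Finset.mem_filter, hmemP] at hp
            obtain ⟨⟨_, _, hd⟩, hne⟩ := hp
            have := hsnoc p.1 p.2
            rw [hd, if_neg hne] at this
            exact hammingDist_eq_zero.1 (by omega)
          have hqq : pr q.1 = pr q.2 := by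
            rw [hPd, Finset.mem_filter, hmemP] at hq
            obtain ⟨⟨_, _, hd⟩, hne⟩ := hq
            have := hsnoc q.1 q.2
            rw [hd, if_neg hne] at this
            exact hammingDist_eq_zero.1 (by omega)
          have h1 : (p.1 (Fin.last n), p.2 (Fin.last n)) = (q.1 (Fin.last n), q.2 (Fin.last n)) :=
            congrArg Sigma.fst h
          have h2 : pr p.1 = pr q.1 := by
            have := congrArg (fun s : (_ : ZMod k × ZMod k) × (Fin n → ZMod k) => s.2) h
            exact this
          have hl1 : p.1 (Fin.last n) = q.1 (Fin.last n) := congrArg Prod.fst h1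
          have hl2 : p.2 (Fin.last n) = q.2 (Fin.last n) := congrArg Prod.snd h1
          have e1 : p.1 = q.1 := eq_of_proj_last h2 hl1
          have e2 : p.2 = q.2 := eq_of_proj_last (show pr p.2 = pr q.2 by rw [← hpp, ← hqq, h2]) hl2
          exact Prod.ext e1 e2
      have hsigma : (((univ : Finset (ZMod k)).offDiag.sigma
          (fun q => W q.1 ∩ W q.2)).card : ℝ)
          ≤ ∑ q ∈ (univ : Finset (ZMod k)).offDiag, (min (a q.1) (a q.2) : ℝ) := by
        rw [Finset.card_sigma]
        push_cast
        apply Finset.sum_le_sum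
        intro q _
        have h1 : (W q.1 ∩ W q.2).card ≤ a q.1 := by
          rw [← hWcard]; exact Finset.card_le_card Finset.inter_subset_left
        have h2 : (W q.1 ∩ W q.2).card ≤ a q.2 := by
          rw [← hWcard]; exact Finset.card_le_card Finset.inter_subset_right
        have := le_min h1 h2
        exact_mod_cast this
      calc (Pd.card : ℝ) ≤ _ := by exact_mod_cast hcard
        _ ≤ _ := hsigma
    -- analytic bound on the offDiag sum
    have hana : ∑ q ∈ (univ : Finset (ZMod k)).offDiag, (min (a q.1) (a q.2) : ℝ)
        ≤ ((k:ℝ)-1) * ((V.card : ℝ) * Real.logb 2 (V.card)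
          - ∑ c, (a c : ℝ) * Real.logb 2 (a c)) := by
      set L := Real.logb 2 (V.card) with hL
      have hpair : ∀ q ∈ (univ : Finset (ZMod k)).offDiag,
          (min (a q.1) (a q.2) : ℝ) ≤ (1/2) * (((a q.1 : ℝ) + a q.2) * L
            - (a q.1 : ℝ) * Real.logb 2 (a q.1) - (a q.2 : ℝ) * Real.logb 2 (a q.2)) := by
        intro q hq
        rw [Finset.mem_offDiag] at hq
        have hdisj : Disjoint (Vc q.1) (Vc q.2) :=
          Finset.disjoint_filter.2 fun v _ h1 h2 => hq.2.2 (by rw [← h1, ← h2])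
        have hab : a q.1 + a q.2 ≤ V.card := by
          rw [ha]
          calc (Vc q.1).card + (Vc q.2).card = (Vc q.1 ∪ Vc q.2).card :=
              (Finset.card_union_of_disjoint hdisj).symm
            _ ≤ V.card := Finset.card_le_card (Finset.union_subset
                (Finset.filter_subset _ _) (Finset.filter_subset _ _))
        have := pair_bound (a q.1) (a q.2) V.card hab
        push_cast at this ⊢
        linarith
      calc ∑ q ∈ (univ : Finset (ZMod k)).offDiag, (min (a q.1) (a q.2) : ℝ)
          ≤ ∑ q ∈ (univ : Finset (ZMod k)).offDiag, (1/2) * (((a q.1 : ℝ) + a q.2) * L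
            - (a q.1 : ℝ) * Real.logb 2 (a q.1) - (a q.2 : ℝ) * Real.logb 2 (a q.2)) :=
            Finset.sum_le_sum hpair
        _ = ((k:ℝ)-1) * ((V.card : ℝ) * L - ∑ c, (a c : ℝ) * Real.logb 2 (a c)) := by
            rw [sum_offDiag_eq]
            have hcardZ : (Fintype.card (ZMod k) : ℝ) = k := by rw [ZMod.card]
            have hA : ∑ c, (a c : ℝ) = V.card := by
              rw [← hsum_a]; push_cast; ring
            set f : ZMod k → ℝ := fun c => (a c : ℝ) * Real.logb 2 (a c) with hf
            have e1 : ∑ x : ZMod k, ∑ y : ZMod k, (1/2) * (((a x : ℝ) + a y) * L - f x - f y)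
                = (k:ℝ) * ((V.card : ℝ) * L - ∑ c, f c) := by
              have : ∀ x : ZMod k, ∑ y : ZMod k, (1/2) * (((a x : ℝ) + a y) * L - f x - f y)
                  = (1/2) * (((k:ℝ) * (a x : ℝ) + V.card) * L - (k:ℝ) * f x - ∑ c, f c) := by
                intro x
                rw [← Finset.mul_sum]
                congr 1
                rw [Finset.sum_sub_distrib, Finset.sum_sub_distrib, ← Finset.sum_mul,
                  Finset.sum_add_distrib, Finset.sum_const, Finset.sum_const, hA]
                simp [card_univ, hcardZ]
                try ring
              rw [Finset.sum_congr rfl (fun x _ => this x)]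
              rw [← Finset.mul_sum]
              rw [Finset.sum_sub_distrib, Finset.sum_sub_distrib, ← Finset.sum_mul,
                Finset.sum_add_distrib, ← Finset.mul_sum, hA, Finset.sum_const, ← Finset.mul_sum]
              simp [card_univ, hcardZ]
              try ring
            have e2 : ∑ x : ZMod k, (1/2) * (((a x : ℝ) + a x) * L - f x - f x)
                = (V.card : ℝ) * L - ∑ c, f c := by
              rw [← Finset.mul_sum]
              rw [Finset.sum_sub_distrib, Finset.sum_sub_distrib, ← Finset.sum_mul]
              have : ∑ x : ZMod k, ((a x : ℝ) + a x) = 2 * V.card := by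
                rw [Finset.sum_add_distrib, hA]; ring
              rw [this]
              ring
            rw [e1, e2]
            ring
    -- combine
    have hcast : (P.card : ℝ) = (Ps.card : ℝ) + (Pd.card : ℝ) := by
      rw [← hsplit]; push_cast; ring
    rw [hcast]
    calc (Ps.card : ℝ) + (Pd.card : ℝ)
        ≤ ((k:ℝ)-1) * ∑ c, (a c : ℝ) * Real.logb 2 (a c)
          + ((k:ℝ)-1) * ((V.card : ℝ) * Real.logb 2 (V.card)
            - ∑ c, (a c : ℝ) * Real.logb 2 (a c)) := by
          have := hPd_bound.trans hana
          linarith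
      _ = ((k:ℝ)-1) * ((V.card : ℝ) * Real.logb 2 (V.card)) := by ring

end Aux

/-- For a finite nonempty subgraph `S` of `H(n,k)` (`k ≥ 2`) with average
degree `d̄ = 2|E(S)|/|V(S)|`, we have `log₂ |V(S)| ≥ d̄/(k-1)`, i.e.
`|V(S)|·log₂|V(S)| ≥ 2|E(S)|/(k-1)`. -/
theorem subgraph_avg_degree_log_bound (n k : ℕ) (hk : 2 ≤ k)
    (S : (hammingGraph n k).Subgraph)
    (hV : S.verts.Finite) (hVne : S.verts.Nonempty) (hE : S.edgeSet.Finite) :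
    (S.verts.ncard : ℝ) * Real.logb 2 (S.verts.ncard)
      ≥ 2 * (S.edgeSet.ncard : ℝ) / ((k : ℝ) - 1) := by
  classical
  set Vf := hV.toFinset with hVf
  set Ef := hE.toFinset with hEf
  have hVcard : S.verts.ncard = Vf.card := Set.ncard_eq_toFinset_card _ hV
  have hEcard : S.edgeSet.ncard = Ef.card := Set.ncard_eq_toFinset_card _ hE
  set Q := (Vf ×ˢ Vf).filter (fun p => S.Adj p.1 p.2) with hQ
  have hQP : Q ⊆ (Vf ×ˢ Vf).filter (fun p => hammingDist p.1 p.2 = 1) :=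
    Finset.monotone_filter_right _ (fun p _ hp => S.adj_sub hp)
  have hEQ : 2 * Ef.card ≤ Q.card := by
    apply Finset.mul_card_image_le_card_of_maps_to
      (f := fun p : (Fin n → ZMod k) × (Fin n → ZMod k) => s(p.1, p.2))
    · intro p hp
      rw [hQ, Finset.mem_filter] at hp
      exact hE.mem_toFinset.2 (Subgraph.mem_edgeSet.2 hp.2)
    · intro e he
      induction e with
      | h u v =>
        have hadj : S.Adj u v := Subgraph.mem_edgeSet.1 (hE.mem_toFinset.1 he)
        have hne : u ≠ v := (S.adj_sub hadj).ne
        have h1 : (u, v) ∈ Q.filter (fun p => s(p.1, p.2) = s(u, v)) := by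
          refine Finset.mem_filter.2 ⟨Finset.mem_filter.2 ⟨Finset.mem_product.2
            ⟨hV.mem_toFinset.2 (S.edge_vert hadj), hV.mem_toFinset.2 (S.edge_vert hadj.symm)⟩,
            hadj⟩, rfl⟩
        have h2 : (v, u) ∈ Q.filter (fun p => s(p.1, p.2) = s(u, v)) := by
          refine Finset.mem_filter.2 ⟨Finset.mem_filter.2 ⟨Finset.mem_product.2
            ⟨hV.mem_toFinset.2 (S.edge_vert hadj.symm), hV.mem_toFinset.2 (S.edge_vert hadj)⟩,
            hadj.symm⟩, Sym2.eq_swap⟩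
        calc 2 = ({(u,v), (v,u)} : Finset _).card := by
              rw [Finset.card_pair (by simp [hne])]
          _ ≤ _ := Finset.card_le_card (by
              intro p hp
              rcases Finset.mem_insert.1 hp with rfl | hp
              · exact h1
              · rw [Finset.mem_singleton.1 hp]; exact h2)
  have hkey := keyLemma k hk n Vf
  have hk1 : (0:ℝ) < (k:ℝ) - 1 := by
    have : (2:ℝ) ≤ k := by exact_mod_cast hk
    linarith
  rw [ge_iff_le, div_le_iff₀ hk1]
  have hchain : 2 * (Ef.card : ℝ) ≤ ((k:ℝ) - 1) * ((Vf.card : ℝ) * Real.logb 2 (Vf.card)) := by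
    calc 2 * (Ef.card : ℝ) ≤ (Q.card : ℝ) := by exact_mod_cast hEQ
      _ ≤ _ := by exact_mod_cast Finset.card_le_card hQP
      _ ≤ _ := hkey
  rw [hVcard, hEcard]
  linarith
end
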